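/- Let H : ℝ → ℝ be continuous and coercive and F0 : ℝ → ℝ be continuous, non-increasing and semi-coercive. Let p ∈ ℝ with F0(p) ≥ H(p), and let q ≥ p be minimal with the property that (R̲F0)(p) = min(F0(q), H(q)) (i.e. q satisfies this equality and no q' ∈ [p, q) does). Then F0(q) ≥ H(q), R̲F0 is constant equal to H(q) on the interval [p, q], and H(q') < H(q) for every q' ∈ [p, q). -/

import Mathlib

open Set Filter

attribute [local instance] Classical.propDecidable

noncomputable section

/-- `H` is coercive: `H p → +∞` as `|p| → +∞`. -/
def Coercive (H : ℝ → ℝ) : Prop := Tendsto H (cocompact ℝ) atTop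

/-- `F` is semi-coercive: `F p → +∞` as `p → -∞`. -/
def SemiCoercive (F : ℝ → ℝ) : Prop := Tendsto F atBot atTop

/-- Sub-relaxation: `(R̲F)(p) = sup_{q ≥ p} min (F q) (H q)`. -/
def subR (H F : ℝ → ℝ) (p : ℝ) : ℝ := sSup ((fun q => min (F q) (H q)) '' Ici p)

/-- Super-relaxation: `(R̄F)(p) = inf_{q ≤ p} max (F q) (H q)`. -/
def supR (H F : ℝ → ℝ) (p : ℝ) : ℝ := sInf ((fun q => max (F q) (H q)) '' Iic p)

/-- Relaxation operator: `R̲F` where `F ≥ H`, `R̄F` where `F ≤ H`. -/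
def relax (H F : ℝ → ℝ) (p : ℝ) : ℝ := if H p ≤ F p then subR H F p else supR H F p

/-- `p` is a negative characteristic point of `F` relative to `H`. -/
def negChar (H F : ℝ → ℝ) (p : ℝ) : Prop :=
  H p = F p ∧ ∃ ε > 0, ∀ q ∈ Ioo (p - ε) p, H q < H p

/-- `p` is a positive characteristic point of `F` relative to `H`. -/
def posChar (H F : ℝ → ℝ) (p : ℝ) : Prop :=
  H p = F p ∧ ∃ ε > 0, ∀ q ∈ Ioo p (p + ε), H p < H q

/-- The upper point `p⁺ ∈ ℝ ∪ {+∞}` associated with `p` and `H`. -/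
def upperPt (H : ℝ → ℝ) (p : ℝ) : EReal :=
  if ∀ ε > 0, ∃ q, p < q ∧ q < p + ε ∧ H q ≤ H p then (p : EReal)
  else sSup ((fun q : ℝ => (q : EReal)) '' {q : ℝ | p < q ∧ ∀ r ∈ Ioo p q, H p < H r})

/-- The lower point `p⁻` associated with `p` and `H`. -/
def lowerPt (H : ℝ → ℝ) (p : ℝ) : ℝ :=
  if ∀ ε > 0, ∃ q, p - ε < q ∧ q < p ∧ H p ≤ H q then p
  else sInf {q : ℝ | q < p ∧ ∀ r ∈ Ioo q p, H r < H p}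

/-- `p` is a positive limiter point of `F`. -/
def posLimiter (H F : ℝ → ℝ) (p : ℝ) : Prop :=
  (p : EReal) < upperPt H p ∧ F p ≤ H p ∧
    ∀ q : ℝ, H q < H p → F q ≤ H q →
      {r : ℝ | lowerPt H q < r ∧ (r : EReal) < upperPt H q} ∩
        {r : ℝ | p < r ∧ (r : EReal) < upperPt H p} = ∅

/-- `p` is a negative limiter point of `F`. -/
def negLimiter (H F : ℝ → ℝ) (p : ℝ) : Prop :=
  lowerPt H p < p ∧ H p ≤ F p ∧
    ∀ q : ℝ, H q ≤ F q → H p < H q →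
      {r : ℝ | lowerPt H q < r ∧ (r : EReal) < upperPt H q} ∩ Ioo (lowerPt H p) p = ∅

/-- The Godunov flux associated with `H`. -/
def godunov (H : ℝ → ℝ) (q p : ℝ) : ℝ :=
  if p ≤ q then sSup (H '' Icc p q) else sInf (H '' Icc q p)

/-- The lower (set-valued) Godunov semi-flux `G̲(q,p)`, as a subset of the extended reals. -/
def subG (H : ℝ → ℝ) (q p : ℝ) : Set EReal :=
  if q < p then {⊥}
  else if q = p then Iic ((H p : ℝ) : EReal)
  else {((godunov H q p : ℝ) : EReal)}

/-- The upper (set-valued) Godunov semi-flux `Ḡ(q,p)`, as a subset of the extended reals. -/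
def supG (H : ℝ → ℝ) (q p : ℝ) : Set EReal :=
  if q < p then {((godunov H q p : ℝ) : EReal)}
  else if q = p then Ici ((H p : ℝ) : EReal)
  else {⊤}

/-- Optimality properties of `R̲F0`. -/
theorem subR_optimality (H F0 : ℝ → ℝ)
    (hH : Continuous H) (hHc : Coercive H)
    (hF : Continuous F0) (hFa : Antitone F0) (hFs : SemiCoercive F0)
    (p q : ℝ) (hpF : H p ≤ F0 p) (hpq : p ≤ q)
    (heq : subR H F0 p = min (F0 q) (H q))
    (hmin : ∀ q' ∈ Ico p q, subR H F0 p ≠ min (F0 q') (H q')) :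
    H q ≤ F0 q ∧
    (∀ r ∈ Icc p q, subR H F0 r = H q) ∧
    (∀ q' ∈ Ico p q, H q' < H q) := by
  have hbdd : BddAbove ((fun x => min (F0 x) (H x)) '' Ici p) := by
    refine ⟨F0 p, ?_⟩
    rintro _ ⟨x, hx, rfl⟩
    exact le_trans (min_le_left _ _) (hFa hx)
  have hle : ∀ x ∈ Ici p, min (F0 x) (H x) ≤ subR H F0 p :=
    fun x hx => le_csSup hbdd ⟨x, hx, rfl⟩
  have h3 : ∀ q' ∈ Ico p q, H q' < H q := by
    rintro q' ⟨hq'1, hq'2⟩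
    by_contra h
    push_neg at h
    have hmm : min (F0 q) (H q) ≤ min (F0 q') (H q') :=
      min_le_min (hFa hq'2.le) h
    have h1 : min (F0 q') (H q') ≤ subR H F0 p := hle q' hq'1
    exact hmin q' ⟨hq'1, hq'2⟩ (by linarith)
  have h1 : H q ≤ F0 q := by
    by_contra h
    push_neg at h
    have hpq' : p < q := by
      rcases eq_or_lt_of_le hpq with rfl | h' <;> [linarith; exact h']
    have hU : IsOpen {x | F0 x < H x} := isOpen_lt hF hH
    obtain ⟨δ, hδpos, hball⟩ := Metric.isOpen_iff.mp hU q h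
    set q' := max p (q - δ / 2) with hq'def
    have hq'ge : p ≤ q' := le_max_left _ _
    have hq'ge2 : q - δ / 2 ≤ q' := le_max_right _ _
    have hq'lt : q' < q := max_lt hpq' (by linarith)
    have hq'mem : q' ∈ Metric.ball q δ := by
      rw [Metric.mem_ball, Real.dist_eq, abs_sub_lt_iff]
      constructor <;> linarith
    have hF0q' : F0 q' < H q' := hball hq'mem
    have e1 : min (F0 q') (H q') = F0 q' := min_eq_left hF0q'.le
    have e2 : min (F0 q) (H q) = F0 q := min_eq_left h.le
    have hmon : F0 q ≤ F0 q' := hFa hq'lt.le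
    have hub : min (F0 q') (H q') ≤ subR H F0 p := hle q' hq'ge
    exact hmin q' ⟨hq'ge, hq'lt⟩ (by rw [e1]; linarith)
  refine ⟨h1, ?_, h3⟩
  rintro r ⟨hr1, hr2⟩
  have hsub : ((fun x => min (F0 x) (H x)) '' Ici r) ⊆
      ((fun x => min (F0 x) (H x)) '' Ici p) :=
    Set.image_mono (Set.Ici_subset_Ici.mpr hr1)
  have hbdd' : BddAbove ((fun x => min (F0 x) (H x)) '' Ici r) := hbdd.mono hsub
  have hA : subR H F0 r ≤ subR H F0 p :=
    csSup_le_csSup hbdd ⟨min (F0 q) (H q), ⟨q, hr2, rfl⟩⟩ hsub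
  have hB : min (F0 q) (H q) ≤ subR H F0 r := le_csSup hbdd' ⟨q, hr2, rfl⟩
  have e : min (F0 q) (H q) = H q := min_eq_right h1
  have : subR H F0 p = H q := by rw [heq, e]
  linarith
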